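/- arXiv:2511.11398 — 4 statements merged into one kernel-verified Lean document; each statement's English description precedes it below -/
import Mathlib

section
/- For a complex polynomial C(t) = Σ_i a_i t^i and a real number R > 0, set ‖C‖_R = Σ_i |a_i| R^i. Let μ ∈ ℂ, D ∈ ℕ and R > 0 satisfy D/R < |μ|, and define Δ v = μ·v + dv/dt on ℂ[t]. Then for every complex polynomial C with deg C ≤ D and every integer j ≥ 1: ‖C‖_R ≤ (|μ| − D/R)^{−j} · ‖Δ^j C‖_R. -/
/-- The weighted `ℓ¹`-norm on complex polynomials: for `C(t) = Σ_i a_i t^i`,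
`‖C‖_R = Σ_i |a_i| R^i`. -/
noncomputable def normR (R : ℝ) (C : Polynomial ℂ) : ℝ :=
  ∑ i ∈ C.support, ‖C.coeff i‖ * R ^ i

/-- The operator `Δ v = μ·v + dv/dt` on `ℂ[t]`. -/
noncomputable def DeltaOp (μ : ℂ) (v : Polynomial ℂ) : Polynomial ℂ :=
  Polynomial.C μ * v + Polynomial.derivative v

open Polynomial Finset in
lemma normR_eq_range (R : ℝ) (C : Polynomial ℂ) {n : ℕ} (h : C.natDegree < n) :
    normR R C = ∑ i ∈ Finset.range n, ‖C.coeff i‖ * R ^ i := by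
  unfold normR
  refine Finset.sum_subset (Polynomial.supp_subset_range h) ?_
  intro i _ hi
  simp [Polynomial.notMem_support_iff.mp hi]

open Polynomial in
lemma natDegree_deltaOp_le (μ : ℂ) (D : ℕ) (C : Polynomial ℂ) (hdeg : C.natDegree ≤ D) :
    (DeltaOp μ C).natDegree ≤ D := by
  refine (Polynomial.natDegree_add_le _ _).trans (max_le ?_ ?_)
  · exact (Polynomial.natDegree_C_mul_le _ _).trans hdeg
  · exact (Polynomial.natDegree_derivative_le _).trans ((Nat.sub_le _ _).trans hdeg)

open Polynomial Finset in
lemma deltaOp_step (R : ℝ) (hR : 0 < R) (μ : ℂ) (D : ℕ)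
    (hμ : (D : ℝ) / R < ‖μ‖)
    (C : Polynomial ℂ) (hdeg : C.natDegree ≤ D) :
    (‖μ‖ - (D : ℝ) / R) * normR R C ≤ normR R (DeltaOp μ C) := by
  have hDR : 0 ≤ (D : ℝ) / R := div_nonneg (Nat.cast_nonneg D) hR.le
  have hC1 : normR R C = ∑ i ∈ range (D + 1), ‖C.coeff i‖ * R ^ i :=
    normR_eq_range R C (Nat.lt_succ_of_le hdeg)
  have hΔ : normR R (DeltaOp μ C)
      = ∑ i ∈ range (D + 1), ‖(DeltaOp μ C).coeff i‖ * R ^ i :=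
    normR_eq_range R _ (Nat.lt_succ_of_le (natDegree_deltaOp_le μ D C hdeg))
  have hcoeff : ∀ i, (DeltaOp μ C).coeff i = μ * C.coeff i + C.coeff (i + 1) * (i + 1 : ℂ) := by
    intro i
    simp [DeltaOp, Polynomial.coeff_derivative]
  -- S2 bound
  have hS2 : ∑ i ∈ range (D + 1), ((i : ℝ) + 1) * ‖C.coeff (i + 1)‖ * R ^ i
      ≤ ((D : ℝ) / R) * normR R C := by
    have hstep : ∀ i ∈ range (D + 1),
        ((i : ℝ) + 1) * ‖C.coeff (i + 1)‖ * R ^ i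
        ≤ ((D : ℝ) / R) * (‖C.coeff (i + 1)‖ * R ^ (i + 1)) := by
      intro i _
      by_cases h0 : C.coeff (i + 1) = 0
      · simp [h0]
      · have hle : (i : ℝ) + 1 ≤ (D : ℝ) := by
          have : i + 1 ≤ D := le_trans (Polynomial.le_natDegree_of_ne_zero h0) hdeg
          exact_mod_cast this
        have hRpow : (0 : ℝ) < R ^ i := pow_pos hR i
        have habs : 0 ≤ ‖C.coeff (i + 1)‖ := norm_nonneg _
        have : ((D : ℝ) / R) * (‖C.coeff (i + 1)‖ * R ^ (i + 1))
            = (D : ℝ) * (‖C.coeff (i + 1)‖ * R ^ i) := by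
          field_simp [hR.ne']
          ring
        rw [this]
        nlinarith [mul_le_mul_of_nonneg_right hle (mul_nonneg habs hRpow.le)]
    calc ∑ i ∈ range (D + 1), ((i : ℝ) + 1) * ‖C.coeff (i + 1)‖ * R ^ i
        ≤ ∑ i ∈ range (D + 1), ((D : ℝ) / R) * (‖C.coeff (i + 1)‖ * R ^ (i + 1)) :=
          Finset.sum_le_sum hstep
      _ = ((D : ℝ) / R) * ∑ i ∈ range (D + 1), ‖C.coeff (i + 1)‖ * R ^ (i + 1) := by
          rw [Finset.mul_sum]
      _ ≤ ((D : ℝ) / R) * normR R C := by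
          refine mul_le_mul_of_nonneg_left ?_ hDR
          have h2 : normR R C = ∑ i ∈ range (D + 2), ‖C.coeff i‖ * R ^ i :=
            normR_eq_range R C (Nat.lt_succ_of_le (hdeg.trans (Nat.le_succ D)))
          rw [h2, Finset.sum_range_succ' (fun i => ‖C.coeff i‖ * R ^ i) (D + 1)]
          have : 0 ≤ ‖C.coeff 0‖ * R ^ 0 :=
            mul_nonneg (norm_nonneg _) (pow_nonneg hR.le _)
          linarith
  -- main pointwise bound
  have hmain : ∀ i ∈ range (D + 1),
      ‖μ‖ * (‖C.coeff i‖ * R ^ i)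
      ≤ ‖(DeltaOp μ C).coeff i‖ * R ^ i
        + ((i : ℝ) + 1) * ‖C.coeff (i + 1)‖ * R ^ i := by
    intro i _
    have h1 : ‖μ * C.coeff i‖
        ≤ ‖(DeltaOp μ C).coeff i‖ + ‖C.coeff (i + 1) * (i + 1 : ℂ)‖ := by
      have : μ * C.coeff i = (DeltaOp μ C).coeff i - C.coeff (i + 1) * (i + 1 : ℂ) := by
        rw [hcoeff i]; ring
      rw [this]
      exact (norm_sub_le _ _)
    have h2 : ‖C.coeff (i + 1) * (i + 1 : ℂ)‖
        = ((i : ℝ) + 1) * ‖C.coeff (i + 1)‖ := by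
      rw [norm_mul]
      have : ‖(i + 1 : ℂ)‖ = (i : ℝ) + 1 := by
        rw [show ((i : ℂ) + 1) = ((i + 1 : ℕ) : ℂ) by push_cast; ring]
        rw [Complex.norm_natCast]; push_cast; ring
      rw [this]; ring
    have hRpow : (0 : ℝ) ≤ R ^ i := pow_nonneg hR.le i
    have := mul_le_mul_of_nonneg_right h1 hRpow
    rw [norm_mul, h2] at this
    nlinarith
  have hsum := Finset.sum_le_sum hmain
  rw [Finset.sum_add_distrib] at hsum
  have hμC : ‖μ‖ * normR R C
      = ∑ i ∈ range (D + 1), ‖μ‖ * (‖C.coeff i‖ * R ^ i) := by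
    rw [hC1, Finset.mul_sum]
  rw [← hμC, ← hΔ] at hsum
  linarith
open Polynomial in
/-- If `D/R < |μ|` and `deg C ≤ D`, then for all `j ≥ 1`:
`‖C‖_R ≤ (|μ| − D/R)^{−j} ‖Δ^j C‖_R`. -/
theorem normR_le_iterate_delta (R : ℝ) (hR : 0 < R) (μ : ℂ) (D : ℕ)
    (hμ : (D : ℝ) / R < ‖μ‖)
    (C : Polynomial ℂ) (hdeg : C.natDegree ≤ D) (j : ℕ) (hj : 1 ≤ j) :
    normR R C ≤ (‖μ‖ - (D : ℝ) / R)⁻¹ ^ j * normR R ((DeltaOp μ)^[j] C) := by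
  clear hj
  set ε : ℝ := ‖μ‖ - (D : ℝ) / R with hε
  have hεpos : 0 < ε := sub_pos.mpr hμ
  induction j generalizing C with
  | zero => simp
  | succ j ih =>
    have h1 : ε * normR R C ≤ normR R (DeltaOp μ C) := deltaOp_step R hR μ D hμ C hdeg
    have h2 := ih (DeltaOp μ C) (natDegree_deltaOp_le μ D C hdeg)
    rw [Function.iterate_succ_apply]
    calc normR R C ≤ ε⁻¹ * normR R (DeltaOp μ C) := by
          rw [le_inv_mul_iff₀ hεpos]; linarith
      _ ≤ ε⁻¹ * (ε⁻¹ ^ j * normR R ((DeltaOp μ)^[j] (DeltaOp μ C))) := by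
          exact mul_le_mul_of_nonneg_left h2 (inv_nonneg.mpr hεpos.le)
      _ = ε⁻¹ ^ (j + 1) * normR R ((DeltaOp μ)^[j] (DeltaOp μ C)) := by ring
end

section
/- Let δ > 0 and let u, v ∈ ℂ satisfy Re u ≥ δ and Re v ≥ δ. Then |Γ(u)·Γ(v)/Γ(u+v)| ≤ Γ(δ)²/Γ(2δ), where Γ is the complex Gamma function. -/
open MeasureTheory intervalIntegral

lemma beta_eq_real (δ : ℝ) (hδ : 0 < δ) :
    (∫ t in (0:ℝ)..1, t ^ (δ - 1) * (1 - t) ^ (δ - 1)) =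
      Real.Gamma δ ^ 2 / Real.Gamma (2 * δ) := by
  have hδ' : 0 < (δ : ℂ).re := by simpa using hδ
  have hB := Complex.Gamma_mul_Gamma_eq_betaIntegral hδ' hδ'
  have hΓpos : 0 < Real.Gamma (2 * δ) := Real.Gamma_pos_of_pos (by linarith)
  have hΓne : Complex.Gamma ((δ : ℂ) + δ) ≠ 0 := by
    rw [show ((δ:ℂ) + δ) = ((2*δ : ℝ) : ℂ) by push_cast; ring, Complex.Gamma_ofReal]
    exact_mod_cast hΓpos.ne'
  have hBval : Complex.betaIntegral δ δ = ((Real.Gamma δ ^ 2 / Real.Gamma (2 * δ) : ℝ) : ℂ) := by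
    rw [show ((δ:ℂ) + δ) = ((2*δ : ℝ) : ℂ) by push_cast; ring, Complex.Gamma_ofReal] at hB
    have hne : ((Real.Gamma (2*δ) : ℝ) : ℂ) ≠ 0 := by exact_mod_cast hΓpos.ne'
    push_cast
    rw [eq_div_iff hne, mul_comm]
    push_cast at hB ⊢
    rw [show ((2:ℂ) * (δ:ℂ)) = ((2*δ : ℝ) : ℂ) by push_cast; ring, Complex.Gamma_ofReal] at hB
    linear_combination -hB
  have : ((∫ t in (0:ℝ)..1, t ^ (δ - 1) * (1 - t) ^ (δ - 1) : ℝ) : ℂ)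
      = Complex.betaIntegral δ δ := by
    rw [← intervalIntegral.integral_ofReal, Complex.betaIntegral]
    refine intervalIntegral.integral_congr (fun t ht => ?_)
    rw [Set.uIcc_of_le zero_le_one] at ht
    push_cast
    rw [Complex.ofReal_cpow ht.1, Complex.ofReal_cpow (by linarith [ht.2])]
    push_cast
    ring_nf
  rw [hBval] at this
  exact_mod_cast this

/-- For `Re u ≥ δ > 0` and `Re v ≥ δ`: `|Γ(u)Γ(v)/Γ(u+v)| ≤ Γ(δ)²/Γ(2δ)`. -/
theorem abs_beta_le (δ : ℝ) (hδ : 0 < δ) (u v : ℂ) (hu : δ ≤ u.re) (hv : δ ≤ v.re) :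
    ‖Complex.Gamma u * Complex.Gamma v / Complex.Gamma (u + v)‖ ≤
      (Real.Gamma δ) ^ 2 / Real.Gamma (2 * δ) := by
  have hu0 : 0 < u.re := lt_of_lt_of_le hδ hu
  have hv0 : 0 < v.re := lt_of_lt_of_le hδ hv
  have hδ' : 0 < (δ : ℂ).re := by simpa using hδ
  have hΓne : Complex.Gamma (u + v) ≠ 0 :=
    Complex.Gamma_ne_zero_of_re_pos (by rw [Complex.add_re]; linarith)
  have heq : Complex.Gamma u * Complex.Gamma v / Complex.Gamma (u + v)
      = Complex.betaIntegral u v := by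
    rw [Complex.Gamma_mul_Gamma_eq_betaIntegral hu0 hv0]
    field_simp
  rw [heq, ← beta_eq_real δ hδ, Complex.betaIntegral]
  -- integrability of the bounding function
  have hint : IntervalIntegrable (fun t : ℝ => t ^ (δ - 1) * (1 - t) ^ (δ - 1))
      volume 0 1 := by
    refine (Complex.betaIntegral_convergent hδ' hδ').norm.congr_ae ?_
    rw [Set.uIoc_of_le zero_le_one]
    filter_upwards [ae_restrict_mem measurableSet_Ioc] with t ht
    have h1 : (0:ℝ) < t := ht.1
    have h2 : (0:ℝ) ≤ 1 - t := by linarith [ht.2]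
    simp only [norm_mul]
    rw [show ((δ:ℂ) - 1) = ((δ - 1 : ℝ) : ℂ) by push_cast; ring]
    rw [Complex.norm_cpow_eq_rpow_re_of_pos h1, show ((1:ℂ) - t) = (((1 - t : ℝ)) : ℂ) by push_cast; ring]
    rcases eq_or_lt_of_le h2 with h2' | h2'
    · rw [← h2']
      simp [Complex.cpow_def, Real.rpow_def_of_pos h1, Real.zero_rpow, Complex.ofReal_eq_zero]
      rcases eq_or_ne δ 1 with h | h
      · simp [h]
      · simp [sub_eq_zero, h, Real.zero_rpow (sub_ne_zero.mpr h),
          fun hh : (δ:ℂ) - 1 = 0 => h (by exact_mod_cast sub_eq_zero.mp hh)]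
    · rw [Complex.norm_cpow_eq_rpow_re_of_pos h2']
      simp
  have hbnd : ∀ᵐ (t : ℝ) ∂(volume.restrict (Set.uIoc (0:ℝ) 1)),
      ‖(t:ℂ) ^ (u - 1) * (1 - (t:ℂ)) ^ (v - 1)‖ ≤ t ^ (δ - 1) * (1 - t) ^ (δ - 1) := by
    have hne1 : ∀ᵐ (t : ℝ) ∂(volume.restrict (Set.uIoc (0:ℝ) 1)), t ≠ 1 :=
      ae_mono Measure.restrict_le_self
        (by exact compl_mem_ae_iff.mpr (Real.volume_singleton (a := 1)))
    rw [Set.uIoc_of_le zero_le_one] at hne1 ⊢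
    filter_upwards [ae_restrict_mem measurableSet_Ioc, hne1] with t ht htne
    have h1 : (0:ℝ) < t := ht.1
    have h2 : (0:ℝ) < 1 - t := by
      rcases lt_or_eq_of_le ht.2 with h | h
      · linarith
      · exact absurd h htne
    simp only [norm_mul]
    have ha : ‖(t:ℂ) ^ (u - 1)‖ ≤ t ^ (δ - 1) := by
      rw [Complex.norm_cpow_eq_rpow_re_of_pos h1]
      have : (u - 1).re = u.re - 1 := by simp
      rw [this]
      exact Real.rpow_le_rpow_of_exponent_ge h1 ht.2 (by linarith)
    have hb : ‖(1 - (t:ℂ)) ^ (v - 1)‖ ≤ (1 - t) ^ (δ - 1) := by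
      rw [show ((1:ℂ) - t) = (((1 - t : ℝ)) : ℂ) by push_cast; ring]
      rw [Complex.norm_cpow_eq_rpow_re_of_pos h2]
      have : (v - 1).re = v.re - 1 := by simp
      rw [this]
      exact Real.rpow_le_rpow_of_exponent_ge h2 (by linarith [h1]) (by linarith)
    exact mul_le_mul ha hb (norm_nonneg _) (Real.rpow_nonneg h1.le _)
  refine (intervalIntegral.norm_integral_le_of_norm_le zero_le_one (by rw [Set.uIoc_of_le zero_le_one] at hbnd; exact (ae_restrict_iff' measurableSet_Ioc).mp hbnd) hint).trans (le_of_eq ?_)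
  rfl
end

section
/- Let a ∈ ℂ with Re a > 0 and let δ > 0. Then there exists A > 0 such that for every z ∈ ℂ with Re z ≥ δ: |Γ(z)/Γ(z+a)| ≤ A·|z|^{−Re a}, where Γ is the complex Gamma function. -/
set_option maxHeartbeats 1000000


private lemma log_one_add_ge {v : ℝ} (hv : 0 ≤ v) : v - v ^ 2 ≤ Real.log (1 + v) := by
  have h1 : (0:ℝ) < 1 + v := by linarith
  have h2 := Real.one_sub_inv_le_log_of_pos h1
  have h3 : v - v ^ 2 ≤ 1 - (1 + v)⁻¹ := by
    nlinarith [mul_inv_cancel₀ (ne_of_gt h1), inv_nonneg.2 (le_of_lt h1), pow_nonneg hv 3,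
      sq_nonneg v]
  linarith

private lemma real_key (δ c u y ar ai : ℝ) (hδ : 0 < δ) (hc : 0 ≤ c) (hu : δ + c ≤ u)
    (har : 0 < ar) :
    (u * ar + y * ai + (ar ^ 2 + ai ^ 2) / 2) / (u ^ 2 + y ^ 2) ≤
      ar / 2 * (Real.log ((u + 1) ^ 2 + y ^ 2) - Real.log (u ^ 2 + y ^ 2)) +
        2 * |ai| * (1 + 1 / δ) * ((u + 1) / (u + 1 + |y|) - u / (u + |y|)) +
        (1 + 1 / δ) * (ar ^ 2 + ai ^ 2 + ar * (2 + 1 / δ) ^ 2) / 2 *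
          ((δ + c)⁻¹ - (δ + c + 1)⁻¹) := by
  have hδu : δ ≤ u := le_trans (by linarith) hu
  have hupos : 0 < u := lt_of_lt_of_le hδ hδu
  set Y := |y| with hYdef
  have hY0 : 0 ≤ Y := abs_nonneg _
  have hY2 : Y ^ 2 = y ^ 2 := sq_abs _
  set A := u ^ 2 + y ^ 2 with hAdef
  have hApos : 0 < A := by nlinarith [sq_nonneg y]
  have hA'pos : 0 < (u + 1) ^ 2 + y ^ 2 := by nlinarith [sq_nonneg y]
  have huA : u ^ 2 ≤ A := by nlinarith [sq_nonneg y]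
  -- P1 : the log part
  have h2u : 2 * u + 1 ≤ (2 + 1 / δ) * u := by
    have h1 : 1 ≤ u / δ := (one_le_div hδ).2 hδu
    have h2 : (2 + 1 / δ) * u = 2 * u + u / δ := by ring
    linarith
  have hvsq : ((2 * u + 1) / A) ^ 2 ≤ (2 + 1 / δ) ^ 2 / A := by
    rw [div_pow, div_le_div_iff₀ (by positivity) hApos]
    have h1 : (2 * u + 1) ^ 2 ≤ (2 + 1 / δ) ^ 2 * u ^ 2 := by
      calc (2 * u + 1) ^ 2 ≤ ((2 + 1 / δ) * u) ^ 2 := by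
            apply pow_le_pow_left₀ (by linarith) h2u
        _ = (2 + 1 / δ) ^ 2 * u ^ 2 := by ring
    nlinarith [mul_le_mul_of_nonneg_right h1 hApos.le,
      mul_le_mul_of_nonneg_right (mul_le_mul_of_nonneg_left huA (sq_nonneg (2 + 1/δ))) hApos.le]
  have hlog1 : 2 * u / A - (2 + 1 / δ) ^ 2 / A ≤
      Real.log ((u + 1) ^ 2 + y ^ 2) - Real.log A := by
    have he : (u + 1) ^ 2 + y ^ 2 = A * (1 + (2 * u + 1) / A) := by
      field_simp
      ring
    have hv0 : 0 ≤ (2 * u + 1) / A := by positivity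
    have hlb := log_one_add_ge hv0
    have hsplit : (2 * u + 1) / A = 2 * u / A + 1 / A := by ring
    have h1A : (0:ℝ) ≤ 1 / A := by positivity
    rw [he, Real.log_mul hApos.ne' (by positivity)]
    linarith [hlb, hvsq]
  have hP1 : u * ar / A ≤
      ar / 2 * (Real.log ((u + 1) ^ 2 + y ^ 2) - Real.log A) + ar * (2 + 1 / δ) ^ 2 / 2 / A := by
    have h := mul_le_mul_of_nonneg_left hlog1 (by positivity : (0:ℝ) ≤ ar / 2)
    have he : ar / 2 * (2 * u / A - (2 + 1 / δ) ^ 2 / A)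
        = u * ar / A - ar * (2 + 1 / δ) ^ 2 / 2 / A := by ring
    linarith
  -- P2 : the imaginary part
  have hden1 : 0 < u + Y := by linarith
  have hden2 : 0 < u + 1 + Y := by linarith
  have hsdiff : (u + 1) / (u + 1 + Y) - u / (u + Y) = Y / ((u + Y) * (u + 1 + Y)) := by
    field_simp
    ring
  have h1uδ : 1 ≤ u / δ := (one_le_div hδ).2 hδu
  have hP2core : Y / A ≤ 2 * (1 + 1 / δ) * (Y / ((u + Y) * (u + 1 + Y))) := by
    have he : 2 * (1 + 1 / δ) * (Y / ((u + Y) * (u + 1 + Y)))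
        = (2 * (1 + 1 / δ) * Y) / ((u + Y) * (u + 1 + Y)) := by ring
    rw [he, div_le_div_iff₀ hApos (by positivity)]
    have h21 : u + 1 + Y ≤ (1 + 1 / δ) * (u + Y) := by
      have e1 : (1 + 1 / δ) * (u + Y) = u + Y + (u / δ + Y / δ) := by ring
      have e2 : 0 ≤ Y / δ := by positivity
      linarith
    have h22 : (u + Y) ^ 2 ≤ 2 * A := by
      rw [hAdef, ← hY2]; nlinarith [sq_nonneg (u - Y)]
    calc Y * ((u + Y) * (u + 1 + Y))
        ≤ Y * ((u + Y) * ((1 + 1 / δ) * (u + Y))) := by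
          apply mul_le_mul_of_nonneg_left ?_ hY0
          exact mul_le_mul_of_nonneg_left h21 hden1.le
      _ = (1 + 1 / δ) * (Y * (u + Y) ^ 2) := by ring
      _ ≤ (1 + 1 / δ) * (Y * (2 * A)) := by
          apply mul_le_mul_of_nonneg_left ?_ (by positivity)
          exact mul_le_mul_of_nonneg_left h22 hY0
      _ = 2 * (1 + 1 / δ) * Y * A := by ring
  have hP2 : y * ai / A ≤ 2 * |ai| * (1 + 1 / δ) * ((u + 1) / (u + 1 + Y) - u / (u + Y)) := by
    rw [hsdiff]
    have h1 : y * ai ≤ |ai| * Y := by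
      calc y * ai ≤ |y * ai| := le_abs_self _
        _ = |ai| * Y := by rw [hYdef, abs_mul]; ring
    have h2 : y * ai / A ≤ |ai| * Y / A := by
      rw [div_le_div_iff₀ hApos hApos]
      exact mul_le_mul_of_nonneg_right h1 hApos.le
    have h3 := mul_le_mul_of_nonneg_left hP2core (abs_nonneg ai)
    have e1 : |ai| * (Y / A) = |ai| * Y / A := by ring
    have e2 : |ai| * (2 * (1 + 1 / δ) * (Y / ((u + Y) * (u + 1 + Y))))
        = 2 * |ai| * (1 + 1 / δ) * (Y / ((u + Y) * (u + 1 + Y))) := by ring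
    linarith [h3, h2]
  -- P3 : the constant part
  have hδc : 0 < δ + c := by linarith
  have hδc1 : 0 < δ + c + 1 := by linarith
  have hP3core : 1 / A ≤ (1 + 1 / δ) * ((δ + c)⁻¹ - (δ + c + 1)⁻¹) := by
    have he : (δ + c)⁻¹ - (δ + c + 1)⁻¹ = 1 / ((δ + c) * (δ + c + 1)) := by
      field_simp
      ring
    have he2 : (1 + 1 / δ) * (1 / ((δ + c) * (δ + c + 1)))
        = (1 + 1 / δ) / ((δ + c) * (δ + c + 1)) := by ring
    rw [he, he2, div_le_div_iff₀ hApos (by positivity)]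
    have huc : (δ + c) ^ 2 ≤ A := by
      calc (δ + c) ^ 2 ≤ u ^ 2 := pow_le_pow_left₀ hδc.le hu 2
        _ ≤ A := huA
    have h3 : δ + c ≤ (δ + c) ^ 2 / δ := by
      rw [le_div_iff₀ hδ]; nlinarith
    have h4 : (1 + 1 / δ) * (δ + c) ^ 2 = (δ + c) ^ 2 + (δ + c) ^ 2 / δ := by ring
    have h5 : (1 + 1 / δ) * (δ + c) ^ 2 ≤ (1 + 1 / δ) * A :=
      mul_le_mul_of_nonneg_left huc (by positivity)
    nlinarith [h3, h4, h5]
  have hP3 : (ar ^ 2 + ai ^ 2) / 2 / A + ar * (2 + 1 / δ) ^ 2 / 2 / A ≤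
      (1 + 1 / δ) * (ar ^ 2 + ai ^ 2 + ar * (2 + 1 / δ) ^ 2) / 2 *
        ((δ + c)⁻¹ - (δ + c + 1)⁻¹) := by
    have hco : (0:ℝ) ≤ (ar ^ 2 + ai ^ 2 + ar * (2 + 1 / δ) ^ 2) / 2 := by positivity
    have h := mul_le_mul_of_nonneg_left hP3core hco
    have e1 : (ar ^ 2 + ai ^ 2 + ar * (2 + 1 / δ) ^ 2) / 2 * (1 / A)
        = (ar ^ 2 + ai ^ 2) / 2 / A + ar * (2 + 1 / δ) ^ 2 / 2 / A := by ring
    have e2 : (ar ^ 2 + ai ^ 2 + ar * (2 + 1 / δ) ^ 2) / 2 *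
          ((1 + 1 / δ) * ((δ + c)⁻¹ - (δ + c + 1)⁻¹))
        = (1 + 1 / δ) * (ar ^ 2 + ai ^ 2 + ar * (2 + 1 / δ) ^ 2) / 2 *
          ((δ + c)⁻¹ - (δ + c + 1)⁻¹) := by ring
    linarith [h]
  have hsplitL : (u * ar + y * ai + (ar ^ 2 + ai ^ 2) / 2) / A
      = u * ar / A + y * ai / A + (ar ^ 2 + ai ^ 2) / 2 / A := by ring
  rw [hsplitL]
  linarith [hP1, hP2, hP3]


private noncomputable def gF (a z : ℂ) (δ : ℝ) (m : ℕ) : ℝ :=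
  a.re / 2 * Real.log ((z.re + m) ^ 2 + z.im ^ 2) +
    2 * |a.im| * (1 + 1 / δ) * ((z.re + m) / (z.re + m + |z.im|)) -
    (1 + 1 / δ) * (a.re ^ 2 + a.im ^ 2 + a.re * (2 + 1 / δ) ^ 2) / 2 * (δ + m)⁻¹

private lemma log_abs_ratio_le (a : ℂ) (ha : 0 < a.re) {δ : ℝ} (hδ : 0 < δ) {z : ℂ} (hz : δ ≤ z.re) (k : ℕ) :
    Real.log (‖(z + a + k) / (z + k)‖) ≤
      ((z.re + k) * a.re + z.im * a.im + (a.re ^ 2 + a.im ^ 2) / 2) /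
        ((z.re + k) ^ 2 + z.im ^ 2) := by
  have hk0 : (0:ℝ) ≤ k := Nat.cast_nonneg k
  have hre1 : 0 < (z + (k:ℂ)).re := by
    simp only [Complex.add_re, Complex.natCast_re]; linarith
  have hw : z + (k:ℂ) ≠ 0 := fun h => by rw [h] at hre1; simp at hre1
  have hn1 : 0 < Complex.normSq (z + (k:ℂ)) := Complex.normSq_pos.2 hw
  have hd : 0 < (z.re + (k:ℝ)) ^ 2 + z.im ^ 2 := by
    have : 0 < z.re + (k:ℝ) := by linarith
    positivity
  have hre2 : 0 < (z + a + (k:ℂ)).re := by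
    simp only [Complex.add_re, Complex.natCast_re]; linarith
  have hwa : z + a + (k:ℂ) ≠ 0 := fun h => by rw [h] at hre2; simp at hre2
  have hn2 : 0 < Complex.normSq (z + a + (k:ℂ)) := Complex.normSq_pos.2 hwa
  have e1 : Real.log (‖(z + a + k) / (z + k)‖) =
      Real.log (Complex.normSq (z + a + k) / Complex.normSq (z + k)) / 2 := by
    rw [Complex.norm_def, Real.log_sqrt (Complex.normSq_nonneg _), Complex.normSq_div]
  have e2 : Complex.normSq (z + a + (k:ℂ)) = Complex.normSq (z + (k:ℂ)) +
      (2 * ((z.re + k) * a.re + z.im * a.im) + (a.re ^ 2 + a.im ^ 2)) := by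
    simp [Complex.normSq_apply, Complex.add_re, Complex.add_im, Complex.natCast_re,
      Complex.natCast_im]
    ring
  have e3 : Complex.normSq (z + (k:ℂ)) = (z.re + k) ^ 2 + z.im ^ 2 := by
    simp [Complex.normSq_apply, Complex.add_re, Complex.add_im, Complex.natCast_re,
      Complex.natCast_im]
    ring
  rw [e1]
  have hlog := Real.log_le_sub_one_of_pos (div_pos hn2 hn1)
  have e4 : (Complex.normSq (z + a + (k:ℂ)) / Complex.normSq (z + (k:ℂ)) - 1) / 2 =
      ((z.re + k) * a.re + z.im * a.im + (a.re ^ 2 + a.im ^ 2) / 2) /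
        ((z.re + k) ^ 2 + z.im ^ 2) := by
    rw [e2, e3]
    field_simp
    ring
  calc Real.log (Complex.normSq (z + a + k) / Complex.normSq (z + k)) / 2
      ≤ (Complex.normSq (z + a + k) / Complex.normSq (z + k) - 1) / 2 := by linarith
    _ = _ := e4


private lemma gF_step (a : ℂ) (ha : 0 < a.re) {δ : ℝ} (hδ : 0 < δ) {z : ℂ} (hz : δ ≤ z.re)
    (k : ℕ) :
    Real.log (‖(z + a + k) / (z + k)‖) ≤ gF a z δ (k + 1) - gF a z δ k := by
  have h1 := log_abs_ratio_le a ha hδ hz k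
  have h2 := real_key δ (k:ℝ) (z.re + k) z.im a.re a.im hδ (Nat.cast_nonneg k) (by linarith) ha
  unfold gF
  push_cast
  ring_nf at h1 h2 ⊢
  linarith [h1, h2]

open Filter Topology

/-- For fixed `a` with `Re a > 0` and `δ > 0`, there is `A > 0` such that for all `z`
with `Re z ≥ δ`: `|Γ(z)/Γ(z+a)| ≤ A·|z|^{−Re a}`. -/
theorem gamma_ratio_bound (a : ℂ) (ha : 0 < a.re) (δ : ℝ) (hδ : 0 < δ) :
    ∃ A > (0 : ℝ), ∀ z : ℂ, δ ≤ z.re →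
      ‖Complex.Gamma z / Complex.Gamma (z + a)‖ ≤
        A * ‖z‖ ^ (-a.re) := by
  refine ⟨Real.exp (2 * |a.im| * (1 + 1 / δ) +
      (1 + 1 / δ) * (a.re ^ 2 + a.im ^ 2 + a.re * (2 + 1 / δ) ^ 2) / 2 / δ),
    Real.exp_pos _, fun z hz => ?_⟩
  set Cδ : ℝ := 2 * |a.im| * (1 + 1 / δ) +
      (1 + 1 / δ) * (a.re ^ 2 + a.im ^ 2 + a.re * (2 + 1 / δ) ^ 2) / 2 / δ with hCδ
  have hzre : 0 < z.re := lt_of_lt_of_le hδ hz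
  have hz0 : z ≠ 0 := fun h => by rw [h] at hzre; simp at hzre
  have habsz : 0 < ‖z‖ := norm_pos_iff.mpr hz0
  have hzj : ∀ j : ℕ, z + (j:ℂ) ≠ 0 := by
    intro j h
    have h1 : 0 < (z + (j:ℂ)).re := by
      simp only [Complex.add_re, Complex.natCast_re]
      have : (0:ℝ) ≤ j := Nat.cast_nonneg j
      linarith
    rw [h] at h1; simp at h1
  have hzaj : ∀ j : ℕ, z + a + (j:ℂ) ≠ 0 := by
    intro j h
    have h1 : 0 < (z + a + (j:ℂ)).re := by
      simp only [Complex.add_re, Complex.natCast_re]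
      have : (0:ℝ) ≤ j := Nat.cast_nonneg j
      linarith
    rw [h] at h1; simp at h1
  -- identity for the ratio of Gamma sequences
  have hident : ∀ n : ℕ, n ≠ 0 → Complex.GammaSeq z n / Complex.GammaSeq (z + a) n
      = (n:ℂ) ^ (-a) * ∏ j ∈ Finset.range (n + 1), ((z + a + j) / (z + j)) := by
    intro n hn
    have hn0 : ((n:ℕ):ℂ) ≠ 0 := Nat.cast_ne_zero.2 hn
    have hP : ∏ j ∈ Finset.range (n + 1), (z + (j:ℂ)) ≠ 0 :=
      Finset.prod_ne_zero_iff.2 fun j _ => hzj j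
    have hQ : ∏ j ∈ Finset.range (n + 1), (z + a + (j:ℂ)) ≠ 0 :=
      Finset.prod_ne_zero_iff.2 fun j _ => hzaj j
    have hfac : ((Nat.factorial n : ℕ):ℂ) ≠ 0 := Nat.cast_ne_zero.2 (Nat.factorial_ne_zero n)
    have hcp : (n:ℂ) ^ (z + a) ≠ 0 := by
      intro h; exact hn0 ((Complex.cpow_eq_zero_iff _ _).1 h).1
    have hsub : (n:ℂ) ^ (-a) = (n:ℂ) ^ z / (n:ℂ) ^ (z + a) := by
      rw [show -a = z - (z + a) by ring, Complex.cpow_sub _ _ hn0]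
    rw [Complex.GammaSeq, Complex.GammaSeq, Finset.prod_div_distrib, hsub]
    field_simp

  -- per-term to telescoping sum
  have hfacpos : ∀ j : ℕ, 0 < ‖(z + a + j) / (z + j)‖ := fun j =>
    norm_pos_iff.mpr (div_ne_zero (hzaj j) (hzj j))
  have hsum : ∀ n : ℕ, ∑ k ∈ Finset.range (n + 1),
      Real.log (‖(z + a + k) / (z + k)‖) ≤ gF a z δ (n + 1) - gF a z δ 0 := by
    intro n
    calc ∑ k ∈ Finset.range (n + 1), Real.log (‖(z + a + k) / (z + k)‖)
        ≤ ∑ k ∈ Finset.range (n + 1), (gF a z δ (k + 1) - gF a z δ k) :=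
          Finset.sum_le_sum fun k _ => gF_step a ha hδ hz k
      _ = gF a z δ (n + 1) - gF a z δ 0 := Finset.sum_range_sub _ _
  have heA : ∀ m : ℕ, (z.re + (m:ℝ)) ^ 2 + z.im ^ 2 = ‖z + (m:ℂ)‖ ^ 2 := by
    intro m
    rw [Complex.sq_norm]
    simp only [Complex.normSq_apply, Complex.add_re, Complex.add_im, Complex.natCast_re,
      Complex.natCast_im, add_zero]
    ring
  have hgF : ∀ n : ℕ, gF a z δ (n + 1) - gF a z δ 0 ≤
      Cδ + a.re * (Real.log (‖z + ((n + 1 : ℕ):ℂ)‖) - Real.log (‖z‖)) := by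
    intro n
    have hb1 : (0:ℝ) < ‖z + ((n + 1 : ℕ):ℂ)‖ := norm_pos_iff.mpr (hzj (n + 1))
    have e1 : Real.log ((z.re + ((n + 1 : ℕ):ℝ)) ^ 2 + z.im ^ 2)
        = 2 * Real.log (‖z + ((n + 1 : ℕ):ℂ)‖) := by
      rw [heA (n + 1), Real.log_pow]
      norm_num
    have e0 : Real.log ((z.re + ((0 : ℕ):ℝ)) ^ 2 + z.im ^ 2)
        = 2 * Real.log (‖z‖) := by
      have := heA 0
      simp only [Nat.cast_zero, add_zero, Complex.ofReal_zero] at this ⊢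
      rw [this, Real.log_pow]
      norm_num
    have hs1 : (z.re + ((n + 1 : ℕ):ℝ)) / (z.re + ((n + 1 : ℕ):ℝ) + |z.im|) ≤ 1 := by
      have h1 : (0:ℝ) < z.re + ((n + 1 : ℕ):ℝ) := by
        have : (0:ℝ) ≤ ((n + 1 : ℕ):ℝ) := Nat.cast_nonneg _
        linarith
      rw [div_le_one (by positivity)]
      have := abs_nonneg z.im
      linarith
    have hs0 : 0 ≤ (z.re + ((0 : ℕ):ℝ)) / (z.re + ((0 : ℕ):ℝ) + |z.im|) := by
      apply div_nonneg
      · simp; linarith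
      · have := abs_nonneg z.im; simp; linarith
    have hMc0 : (0:ℝ) ≤ 2 * |a.im| * (1 + 1 / δ) := by positivity
    have hEc0 : (0:ℝ) ≤ (1 + 1 / δ) * (a.re ^ 2 + a.im ^ 2 + a.re * (2 + 1 / δ) ^ 2) / 2 := by
      positivity
    have hMs1 := mul_le_of_le_one_right hMc0 hs1
    have hMs0 := mul_nonneg hMc0 hs0
    have hi1 : (0:ℝ) ≤ (1 + 1 / δ) * (a.re ^ 2 + a.im ^ 2 + a.re * (2 + 1 / δ) ^ 2) / 2 *
        (δ + ((n + 1 : ℕ):ℝ))⁻¹ := by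
      apply mul_nonneg hEc0
      have : (0:ℝ) ≤ ((n + 1 : ℕ):ℝ) := Nat.cast_nonneg _
      positivity
    have hi0 : (δ + ((0 : ℕ):ℝ))⁻¹ = δ⁻¹ := by norm_num
    unfold gF
    rw [hCδ, e1, e0, hi0]
    have hδinv : (1 + 1 / δ) * (a.re ^ 2 + a.im ^ 2 + a.re * (2 + 1 / δ) ^ 2) / 2 / δ
        = (1 + 1 / δ) * (a.re ^ 2 + a.im ^ 2 + a.re * (2 + 1 / δ) ^ 2) / 2 * δ⁻¹ := by
      ring
    rw [hδinv]
    linarith [hMs1, hMs0, hi1]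
  -- product bound
  have hprodle : ∀ n : ℕ, ∏ j ∈ Finset.range (n + 1), ‖(z + a + j) / (z + j)‖ ≤
      Real.exp Cδ * ‖z + ((n + 1 : ℕ):ℂ)‖ ^ a.re * ‖z‖ ^ (-a.re) := by
    intro n
    have hb1 : (0:ℝ) < ‖z + ((n + 1 : ℕ):ℂ)‖ := norm_pos_iff.mpr (hzj (n + 1))
    have e : ∏ j ∈ Finset.range (n + 1), ‖(z + a + j) / (z + j)‖
        = Real.exp (∑ k ∈ Finset.range (n + 1),
            Real.log (‖(z + a + k) / (z + k)‖)) := by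
      rw [Real.exp_sum]
      exact (Finset.prod_congr rfl fun k _ => (Real.exp_log (hfacpos k)).symm)
    rw [e]
    have h1 := le_trans (hsum n) (hgF n)
    calc Real.exp (∑ k ∈ Finset.range (n + 1),
            Real.log (‖(z + a + k) / (z + k)‖))
        ≤ Real.exp (Cδ + a.re * (Real.log (‖z + ((n + 1 : ℕ):ℂ)‖) -
            Real.log (‖z‖))) := Real.exp_le_exp.2 h1
      _ = Real.exp Cδ * ‖z + ((n + 1 : ℕ):ℂ)‖ ^ a.re * ‖z‖ ^ (-a.re) := by
          rw [Real.rpow_def_of_pos hb1, Real.rpow_def_of_pos habsz, ← Real.exp_add,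
            ← Real.exp_add]
          congr 1
          ring
  -- bound for each GammaSeq ratio
  have hperN : ∀ n : ℕ, 1 ≤ n →
      ‖Complex.GammaSeq z n / Complex.GammaSeq (z + a) n‖ ≤
      Real.exp Cδ * ‖z‖ ^ (-a.re) *
        ((‖z‖ + ((n:ℝ) + 1)) / (n:ℝ)) ^ a.re := by
    intro n hn
    have hnR : (0:ℝ) < (n:ℝ) := by exact_mod_cast hn
    rw [hident n (by omega), norm_mul, norm_prod]
    have habs_n : ‖(n:ℂ) ^ (-a)‖ = (n:ℝ) ^ (-a.re) := by
      rw [show ((n:ℕ):ℂ) = (((n:ℕ):ℝ):ℂ) by push_cast; rfl,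
        Complex.norm_cpow_eq_rpow_re_of_pos hnR]
      simp
    rw [habs_n]
    have h2 : ‖z + ((n + 1 : ℕ):ℂ)‖ ^ a.re ≤ (‖z‖ + ((n:ℝ) + 1)) ^ a.re := by
      apply Real.rpow_le_rpow (norm_nonneg _) ?_ ha.le
      calc ‖z + ((n + 1 : ℕ):ℂ)‖ ≤ ‖z‖ + ‖((n + 1 : ℕ):ℂ)‖ :=
            norm_add_le _ _
        _ = ‖z‖ + ((n:ℝ) + 1) := by rw [Complex.norm_natCast]; push_cast; ring
    calc (n:ℝ) ^ (-a.re) * ∏ j ∈ Finset.range (n + 1), ‖(z + a + j) / (z + j)‖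
        ≤ (n:ℝ) ^ (-a.re) * (Real.exp Cδ * ‖z + ((n + 1 : ℕ):ℂ)‖ ^ a.re *
            ‖z‖ ^ (-a.re)) :=
          mul_le_mul_of_nonneg_left (hprodle n) (Real.rpow_nonneg (Nat.cast_nonneg n) _)
      _ ≤ (n:ℝ) ^ (-a.re) * (Real.exp Cδ * (‖z‖ + ((n:ℝ) + 1)) ^ a.re *
            ‖z‖ ^ (-a.re)) := by
          apply mul_le_mul_of_nonneg_left ?_ (Real.rpow_nonneg (Nat.cast_nonneg n) _)
          exact mul_le_mul_of_nonneg_right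
            (mul_le_mul_of_nonneg_left h2 (Real.exp_pos _).le)
            (Real.rpow_nonneg (norm_nonneg z) _)
      _ = Real.exp Cδ * ‖z‖ ^ (-a.re) *
            ((‖z‖ + ((n:ℝ) + 1)) / (n:ℝ)) ^ a.re := by
          rw [Real.div_rpow (by positivity) (Nat.cast_nonneg n),
            Real.rpow_neg (Nat.cast_nonneg n)]
          ring
  -- limits
  have hne : Complex.Gamma (z + a) ≠ 0 := Complex.Gamma_ne_zero_of_re_pos (by
    simp only [Complex.add_re]; linarith)
  have hL : Tendsto (fun n : ℕ => ‖Complex.GammaSeq z n / Complex.GammaSeq (z + a) n‖)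
      atTop (𝓝 (‖Complex.Gamma z / Complex.Gamma (z + a)‖)) :=
    (continuous_norm.tendsto _).comp
      ((Complex.GammaSeq_tendsto_Gamma z).div (Complex.GammaSeq_tendsto_Gamma (z + a)) hne)
  have hq : Tendsto (fun n : ℕ => (‖z‖ + ((n:ℝ) + 1)) / (n:ℝ)) atTop (𝓝 1) := by
    have l1 : Tendsto (fun n : ℕ => (‖z‖ + 1) / (n:ℝ)) atTop (𝓝 0) :=
      tendsto_const_div_atTop_nhds_zero_nat _
    have l2 : Tendsto (fun n : ℕ => 1 + (‖z‖ + 1) / (n:ℝ)) atTop (𝓝 1) := by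
      simpa using l1.const_add 1
    apply l2.congr'
    filter_upwards [eventually_ge_atTop 1] with n hn
    have hn0 : (n:ℝ) ≠ 0 := Nat.cast_ne_zero.2 (by omega)
    field_simp
    ring
  have hR : Tendsto (fun n : ℕ => Real.exp Cδ * ‖z‖ ^ (-a.re) *
      ((‖z‖ + ((n:ℝ) + 1)) / (n:ℝ)) ^ a.re) atTop
      (𝓝 (Real.exp Cδ * ‖z‖ ^ (-a.re))) := by
    have h := (hq.rpow_const (Or.inr ha.le)).const_mul
      (Real.exp Cδ * ‖z‖ ^ (-a.re))
    simpa [Real.one_rpow] using h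
  exact le_of_tendsto_of_tendsto hL hR (by
    filter_upwards [eventually_ge_atTop 1] with n hn
    exact hperN n hn)
end

section
/- Fix κ ≥ 1, r = (r_1,…,r_κ) ∈ ℂ^κ with Re r_i > 0 for all i, and real numbers s > 0, R > 1, 𝒦 ≥ 0. For m ∈ ℤ₊^κ write |m| = m_1+…+m_κ and ⟨m,r⟩ = m_1 r_1+…+m_κ r_κ; for a complex polynomial C(t) = Σ_i a_i t^i set ‖C‖_R = Σ_i |a_i| R^i. For a family η = (C_m)_{m ∈ ℤ₊^κ∖{0}} of complex polynomials with deg C_m ≤ 𝒦|m| for all m, set ‖η‖_0 = Σ_m ‖C_m‖_R / |Γ(⟨m,r⟩/s)|, and let H^0 be the set of such families with ‖η‖_0 < ∞. Then there exists a constant C ≥ 1, depending only on r and s, such that for all η₁ = (a_m), η₂ = (b_m) ∈ H^0 the convolution family η₁η₂ defined by (η₁η₂)_m = Σ_{i} a_i·b_{m−i}, the sum over all i ∈ ℤ₊^κ∖{0} with m−i ∈ ℤ₊^κ∖{0}, satisfies deg (η₁η₂)_m ≤ 𝒦|m| for all m, η₁η₂ ∈ H^0, and ‖η₁η₂‖_0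 ≤ C·‖η₁‖_0·‖η₂‖_0. -/
/-- `|m| = m_1 + … + m_κ` for a multi-index `m`. -/
def msize {κ : ℕ} (m : Fin κ → ℕ) : ℕ := ∑ i, m i

/-- `⟨m,r⟩ = m_1 r_1 + … + m_κ r_κ`. -/
noncomputable def mdot {κ : ℕ} (r : Fin κ → ℂ) (m : Fin κ → ℕ) : ℂ := ∑ i, (m i : ℂ) * r i

/-- Convolution (Cauchy product) of families of polynomials indexed by multi-indices. -/
noncomputable def mconv {κ : ℕ} (η₁ η₂ : (Fin κ → ℕ) → Polynomial ℂ) :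
    (Fin κ → ℕ) → Polynomial ℂ :=
  fun m => ∑ᶠ (p : (Fin κ → ℕ) × (Fin κ → ℕ)) (_ : p.1 + p.2 = m), η₁ p.1 * η₂ p.2

/-- The Gamma-weighted norm `‖η‖_0 = Σ_{m ≠ 0} ‖C_m‖_R / |Γ(⟨m,r⟩/s)|`. -/
noncomputable def norm0 {κ : ℕ} (r : Fin κ → ℂ) (s R : ℝ)
    (η : (Fin κ → ℕ) → Polynomial ℂ) : ℝ :=
  ∑' m : {m : Fin κ → ℕ // m ≠ 0},
    normR R (η m.1) / ‖Complex.Gamma (mdot r m.1 / (s : ℂ))‖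

/-- Membership in the space `H⁰`: the family is supported on nonzero multi-indices,
satisfies the degree bound `deg C_m ≤ 𝒦|m|`, and has finite norm `‖·‖_0`. -/
def memH0 {κ : ℕ} (r : Fin κ → ℂ) (s R 𝒦 : ℝ) (η : (Fin κ → ℕ) → Polynomial ℂ) : Prop :=
  η 0 = 0 ∧ (∀ m : Fin κ → ℕ, ((η m).natDegree : ℝ) ≤ 𝒦 * msize m) ∧
  Summable (fun m : {m : Fin κ → ℕ // m ≠ 0} =>
    normR R (η m.1) / ‖Complex.Gamma (mdot r m.1 / (s : ℂ))‖)

/- ### Auxiliary definitions and lemmas -/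


noncomputable def wt {κ : ℕ} (r : Fin κ → ℂ) (s : ℝ) (m : Fin κ → ℕ) : ℝ :=
  ‖Complex.Gamma (mdot r m / (s : ℂ))‖

lemma wt_nonneg {κ : ℕ} (r : Fin κ → ℂ) (s : ℝ) (m : Fin κ → ℕ) : 0 ≤ wt r s m :=
  norm_nonneg _

lemma normR_zero (R : ℝ) : normR R 0 = 0 := by simp [normR]

lemma normR_nonneg {R : ℝ} (hR : 0 ≤ R) (P : Polynomial ℂ) : 0 ≤ normR R P :=
  Finset.sum_nonneg fun i _ => mul_nonneg (norm_nonneg _) (pow_nonneg hR i)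

lemma normR_eq_sum {R : ℝ} (P : Polynomial ℂ) {s : Finset ℕ} (h : P.support ⊆ s) :
    normR R P = ∑ i ∈ s, ‖P.coeff i‖ * R ^ i :=
  Finset.sum_subset h fun i _ hi => by
    rw [Polynomial.notMem_support_iff.mp hi]; simp

lemma normR_add_le {R : ℝ} (hR : 0 ≤ R) (P Q : Polynomial ℂ) :
    normR R (P + Q) ≤ normR R P + normR R Q := by
  classical
  rw [normR_eq_sum (P + Q) (s := P.support ∪ Q.support ∪ (P + Q).support)
        (by intro i hi; simp only [Finset.mem_union]; tauto),
      normR_eq_sum P (s := P.support ∪ Q.support ∪ (P + Q).support)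
        (by intro i hi; simp only [Finset.mem_union]; tauto),
      normR_eq_sum Q (s := P.support ∪ Q.support ∪ (P + Q).support)
        (by intro i hi; simp only [Finset.mem_union]; tauto),
      ← Finset.sum_add_distrib]
  refine Finset.sum_le_sum fun i _ => ?_
  rw [Polynomial.coeff_add, ← add_mul]
  exact mul_le_mul_of_nonneg_right (norm_add_le _ _) (pow_nonneg hR i)

lemma normR_sum_le {R : ℝ} (hR : 0 ≤ R) {ι : Type*} (t : Finset ι) (f : ι → Polynomial ℂ) :
    normR R (∑ i ∈ t, f i) ≤ ∑ i ∈ t, normR R (f i) := by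
  classical
  induction t using Finset.induction_on with
  | empty => simp [normR_zero]
  | insert _ _ hx ih =>
      rename_i a t0
      rw [Finset.sum_insert hx, Finset.sum_insert hx]
      exact (normR_add_le hR _ _).trans (by linarith)

lemma normR_mul_le {R : ℝ} (hR : 0 ≤ R) (P Q : Polynomial ℂ) :
    normR R (P * Q) ≤ normR R P * normR R Q := by
  classical
  set N := P.natDegree + Q.natDegree + 1 with hN
  have hPs : P.support ⊆ Finset.range N := Polynomial.supp_subset_range (by omega)
  have hQs : Q.support ⊆ Finset.range N := Polynomial.supp_subset_range (by omega)
  have hPQ : (P * Q).support ⊆ Finset.range N :=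
    Polynomial.supp_subset_range (by
      have := Polynomial.natDegree_mul_le (p := P) (q := Q); omega)
  have hdisj : (↑(Finset.range N) : Set ℕ).PairwiseDisjoint Finset.HasAntidiagonal.antidiagonal := by
    intro a _ b _ hab
    simp only [Function.onFun, Finset.disjoint_left]
    intro p hp1 hp2
    rw [Finset.HasAntidiagonal.mem_antidiagonal] at hp1 hp2
    exact hab (hp1 ▸ hp2.symm ▸ rfl)
  calc normR R (P * Q) = ∑ n ∈ Finset.range N, ‖(P * Q).coeff n‖ * R ^ n :=
        normR_eq_sum _ hPQ
    _ ≤ ∑ n ∈ Finset.range N, ∑ p ∈ Finset.HasAntidiagonal.antidiagonal n,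
          (‖P.coeff p.1‖ * R ^ p.1) * (‖Q.coeff p.2‖ * R ^ p.2) := by
        refine Finset.sum_le_sum fun n _ => ?_
        rw [Polynomial.coeff_mul]
        calc ‖∑ p ∈ Finset.HasAntidiagonal.antidiagonal n, P.coeff p.1 * Q.coeff p.2‖ * R ^ n
            ≤ (∑ p ∈ Finset.HasAntidiagonal.antidiagonal n, ‖P.coeff p.1‖ * ‖Q.coeff p.2‖)
                * R ^ n := by
              refine mul_le_mul_of_nonneg_right ?_ (pow_nonneg hR n)
              refine (norm_sum_le _ _).trans (le_of_eq ?_)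
              exact Finset.sum_congr rfl fun p _ => norm_mul _ _
          _ = _ := by
              rw [Finset.sum_mul]
              refine Finset.sum_congr rfl fun p hp => ?_
              rw [Finset.HasAntidiagonal.mem_antidiagonal] at hp
              rw [← hp, pow_add]; ring
    _ = ∑ p ∈ (Finset.range N).biUnion Finset.HasAntidiagonal.antidiagonal,
          (‖P.coeff p.1‖ * R ^ p.1) * (‖Q.coeff p.2‖ * R ^ p.2) :=
        (Finset.sum_biUnion hdisj).symm
    _ ≤ ∑ p ∈ Finset.range N ×ˢ Finset.range N,
          (‖P.coeff p.1‖ * R ^ p.1) * (‖Q.coeff p.2‖ * R ^ p.2) := by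
        refine Finset.sum_le_sum_of_subset_of_nonneg ?_ fun p _ _ => ?_
        · intro p hp
          simp only [Finset.mem_biUnion, Finset.mem_range, Finset.HasAntidiagonal.mem_antidiagonal] at hp
          obtain ⟨n, hn, hpn⟩ := hp
          simp only [Finset.mem_product, Finset.mem_range]
          omega
        · have := norm_nonneg (P.coeff p.1)
          have := norm_nonneg (Q.coeff p.2)
          have := pow_nonneg hR p.1
          have := pow_nonneg hR p.2
          positivity
    _ = normR R P * normR R Q := by
        rw [normR_eq_sum P hPs, normR_eq_sum Q hQs, Finset.sum_mul_sum, ← Finset.sum_product']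

lemma abs_Gamma_mul_le {δ : ℝ} (hδ : 0 < δ) {u v : ℂ} (hu : δ ≤ u.re) (hv : δ ≤ v.re) :
    ‖Complex.Gamma u‖ * ‖Complex.Gamma v‖ ≤
      |∫ x in (0:ℝ)..1, x ^ (δ - 1) * (1 - x) ^ (δ - 1)| *
        ‖Complex.Gamma (u + v)‖ := by
  have hu0 : 0 < u.re := hδ.trans_le hu
  have hv0 : 0 < v.re := hδ.trans_le hv
  rw [← norm_mul, Complex.Gamma_mul_Gamma_eq_betaIntegral hu0 hv0, norm_mul, mul_comm]
  refine mul_le_mul_of_nonneg_right ?_ (norm_nonneg _)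
  rw [Complex.betaIntegral]
  have hmem : ∀ᵐ x : ℝ ∂(MeasureTheory.volume.restrict (Set.uIoc (0:ℝ) 1)),
      x ∈ Set.Ioc (0:ℝ) 1 := by
    rw [Set.uIoc_of_le zero_le_one]
    exact MeasureTheory.ae_restrict_mem measurableSet_Ioc
  have hne1 : ∀ᵐ x : ℝ ∂(MeasureTheory.volume.restrict (Set.uIoc (0:ℝ) 1)), x ≠ 1 := by
    refine MeasureTheory.ae_restrict_of_ae ?_
    rw [MeasureTheory.ae_iff]
    have : {x : ℝ | ¬ x ≠ 1} = {1} := by ext x; simp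
    rw [this]
    exact Real.volume_singleton
  apply intervalIntegral.norm_integral_le_abs_of_norm_le
  · filter_upwards [hmem, hne1] with x hx hx1
    have hx0 : 0 < x := hx.1
    have hx2 : 0 < 1 - x := by
      rcases lt_or_eq_of_le hx.2 with h | h
      · linarith
      · exact absurd h hx1
    rw [norm_mul,
      Complex.norm_cpow_eq_rpow_re_of_pos hx0]
    have : (1 : ℂ) - (x : ℂ) = ((1 - x : ℝ) : ℂ) := by push_cast; ring
    rw [this, Complex.norm_cpow_eq_rpow_re_of_pos hx2]
    have e1 : (u - 1).re = u.re - 1 := by simp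
    have e2 : (v - 1).re = v.re - 1 := by simp
    rw [e1, e2]
    have b1 : x ^ (u.re - 1) ≤ x ^ (δ - 1) :=
      Real.rpow_le_rpow_of_exponent_ge hx0 hx.2 (by linarith)
    have b2 : (1 - x) ^ (v.re - 1) ≤ (1 - x) ^ (δ - 1) :=
      Real.rpow_le_rpow_of_exponent_ge hx2 (by linarith) (by linarith)
    exact mul_le_mul b1 b2 (Real.rpow_nonneg hx2.le _) (Real.rpow_nonneg hx0.le _)
  · have h0 : (0:ℝ) < ((δ : ℂ)).re := by simpa using hδ
    refine (Complex.betaIntegral_convergent h0 h0).norm.congr_ae ?_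
    filter_upwards [hmem, hne1] with x hx hx1
    have hx0 : 0 < x := hx.1
    have hx2 : 0 < 1 - x := by
      rcases lt_or_eq_of_le hx.2 with h | h
      · linarith
      · exact absurd h hx1
    rw [norm_mul,
      Complex.norm_cpow_eq_rpow_re_of_pos hx0]
    have : (1 : ℂ) - (x : ℂ) = ((1 - x : ℝ) : ℂ) := by push_cast; ring
    rw [this, Complex.norm_cpow_eq_rpow_re_of_pos hx2]
    norm_num

lemma mdot_add {κ : ℕ} (r : Fin κ → ℂ) (i j : Fin κ → ℕ) :
    mdot r (i + j) = mdot r i + mdot r j := by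
  simp only [mdot, ← Finset.sum_add_distrib]
  refine Finset.sum_congr rfl fun k _ => ?_
  have : (i + j) k = i k + j k := rfl
  rw [this]; push_cast; ring

lemma msize_add {κ : ℕ} (i j : Fin κ → ℕ) : msize (i + j) = msize i + msize j := by
  simp only [msize, ← Finset.sum_add_distrib]
  exact Finset.sum_congr rfl fun k _ => rfl

open Classical in
noncomputable def mT {κ : ℕ} (m : Fin κ → ℕ) : Finset ((Fin κ → ℕ) × (Fin κ → ℕ)) :=
  (Finset.Iic m ×ˢ Finset.Iic m).filter fun p => p.1 + p.2 = m

lemma mem_mT {κ : ℕ} (m : Fin κ → ℕ) (p : (Fin κ → ℕ) × (Fin κ → ℕ)) :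
    p ∈ mT m ↔ p.1 + p.2 = m := by
  simp only [mT, Finset.mem_filter, Finset.mem_product, Finset.mem_Iic]
  refine ⟨fun h => h.2, fun h => ⟨⟨Pi.le_def.mpr fun k => ?_, Pi.le_def.mpr fun k => ?_⟩, h⟩⟩ <;>
    · have h' := congrFun h k
      simp only [Pi.add_apply] at h'
      omega

lemma mconv_eq {κ : ℕ} (η₁ η₂ : (Fin κ → ℕ) → Polynomial ℂ) (m : Fin κ → ℕ) :
    mconv η₁ η₂ m = ∑ p ∈ mT m, η₁ p.1 * η₂ p.2 := by
  classical
  rw [mconv, ← finsum_mem_coe_finset]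
  refine finsum_congr fun p => ?_
  rw [finsum_eq_if, finsum_eq_if]
  refine if_congr ?_ rfl rfl
  rw [Finset.mem_coe, mem_mT]

/-- Lemma 6: `H⁰` is closed under the convolution product, with
`‖η₁η₂‖_0 ≤ C ‖η₁‖_0 ‖η₂‖_0` for a constant `C ≥ 1` depending only on `r` and `s`. -/
theorem H0_submultiplicative (κ : ℕ) (hκ : 1 ≤ κ) (r : Fin κ → ℂ)
    (hr : ∀ i, 0 < (r i).re) (s R 𝒦 : ℝ) (hs : 0 < s) (hR : 1 < R) (h𝒦 : 0 ≤ 𝒦) :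
    ∃ C : ℝ, 1 ≤ C ∧ ∀ η₁ η₂ : (Fin κ → ℕ) → Polynomial ℂ,
      memH0 r s R 𝒦 η₁ → memH0 r s R 𝒦 η₂ →
        memH0 r s R 𝒦 (mconv η₁ η₂) ∧
        norm0 r s R (mconv η₁ η₂) ≤ C * norm0 r s R η₁ * norm0 r s R η₂ := by
  classical
  have hR0 : (0:ℝ) ≤ R := le_trans zero_le_one hR.le
  have hne : Nonempty (Fin κ) := ⟨⟨0, hκ⟩⟩
  set δ : ℝ := (Finset.univ.inf' Finset.univ_nonempty fun i => (r i).re) / s with hδdef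
  have hδ : 0 < δ := by
    apply div_pos _ hs
    rw [Finset.lt_inf'_iff]
    exact fun i _ => hr i
  set B : ℝ := |∫ x in (0:ℝ)..1, x ^ (δ - 1) * (1 - x) ^ (δ - 1)| with hBdef
  refine ⟨max 1 B, le_max_left _ _, ?_⟩
  set C := max 1 B with hCdef
  have hC0 : (0:ℝ) ≤ C := le_trans zero_le_one (le_max_left _ _)
  intro η₁ η₂ h₁ h₂
  obtain ⟨h₁0, h₁deg, h₁sum⟩ := h₁
  obtain ⟨h₂0, h₂deg, h₂sum⟩ := h₂
  -- real part lower bound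
  have hre : ∀ m : Fin κ → ℕ, m ≠ 0 → δ ≤ (mdot r m / (s:ℂ)).re := by
    intro m hm
    rw [Complex.div_ofReal_re, hδdef]
    gcongr
    obtain ⟨k0, hk0⟩ : ∃ k, m k ≠ 0 := by
      by_contra h; push_neg at h; exact hm (funext fun k => h k)
    have hmre : (mdot r m).re = ∑ k, (m k : ℝ) * (r k).re := by
      rw [mdot, Complex.re_sum]
      exact Finset.sum_congr rfl fun k _ => by simp [Complex.mul_re]
    calc (Finset.univ.inf' Finset.univ_nonempty fun i => (r i).re) ≤ (r k0).re :=
          Finset.inf'_le _ (Finset.mem_univ _)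
      _ ≤ (m k0 : ℝ) * (r k0).re :=
          le_mul_of_one_le_left (hr k0).le (by exact_mod_cast Nat.one_le_iff_ne_zero.mpr hk0)
      _ ≤ ∑ k, (m k : ℝ) * (r k).re :=
          Finset.single_le_sum (f := fun k => (m k : ℝ) * (r k).re)
            (fun k _ => mul_nonneg (Nat.cast_nonneg _) (hr k).le) (Finset.mem_univ k0)
      _ = (mdot r m).re := hmre.symm
  have hwpos : ∀ m : Fin κ → ℕ, m ≠ 0 → 0 < wt r s m := fun m hm =>
    norm_pos_iff.mpr (Complex.Gamma_ne_zero_of_re_pos (hδ.trans_le (hre m hm)))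
  have hkey : ∀ i j : Fin κ → ℕ, i ≠ 0 → j ≠ 0 → wt r s i * wt r s j ≤ C * wt r s (i + j) := by
    intro i j hi hj
    have h1 := abs_Gamma_mul_le hδ (hre i hi) (hre j hj)
    have hsum : mdot r (i + j) / (s:ℂ) = mdot r i / (s:ℂ) + mdot r j / (s:ℂ) := by
      rw [mdot_add]; ring
    calc wt r s i * wt r s j
        ≤ B * ‖Complex.Gamma (mdot r i / (s:ℂ) + mdot r j / (s:ℂ))‖ := h1
      _ = B * wt r s (i + j) := by rw [wt, hsum]
      _ ≤ C * wt r s (i + j) :=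
          mul_le_mul_of_nonneg_right (le_max_right _ _) (wt_nonneg _ _ _)
  -- basic facts
  have hG0 : mconv η₁ η₂ 0 = 0 := by
    rw [mconv_eq]
    refine Finset.sum_eq_zero fun p hp => ?_
    rw [mem_mT] at hp
    have hp1 : p.1 = 0 := funext fun k => by
      have h' := congrFun hp k
      simp only [Pi.add_apply, Pi.zero_apply] at h' ⊢
      omega
    rw [hp1, h₁0, zero_mul]
  have hdeg : ∀ m, ((mconv η₁ η₂ m).natDegree : ℝ) ≤ 𝒦 * msize m := by
    intro m
    have hnn : (0:ℝ) ≤ 𝒦 * msize m := mul_nonneg h𝒦 (Nat.cast_nonneg _)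
    have hd : (mconv η₁ η₂ m).natDegree ≤ ⌊𝒦 * (msize m : ℝ)⌋₊ := by
      rw [mconv_eq]
      refine Polynomial.natDegree_sum_le_of_forall_le _ _ fun p hp => ?_
      rw [mem_mT] at hp
      refine le_trans Polynomial.natDegree_mul_le (Nat.le_floor ?_)
      have e := msize_add p.1 p.2
      rw [hp] at e
      have d1 := h₁deg p.1
      have d2 := h₂deg p.2
      rw [e]
      push_cast
      linarith
    calc ((mconv η₁ η₂ m).natDegree : ℝ) ≤ (⌊𝒦 * (msize m : ℝ)⌋₊ : ℝ) := Nat.cast_le.mpr hd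
      _ ≤ 𝒦 * msize m := Nat.floor_le hnn
  -- nonnegativity
  have hF₁nn : ∀ m, 0 ≤ normR R (η₁ m) / wt r s m := fun m =>
    div_nonneg (normR_nonneg hR0 _) (wt_nonneg _ _ _)
  have hF₂nn : ∀ m, 0 ≤ normR R (η₂ m) / wt r s m := fun m =>
    div_nonneg (normR_nonneg hR0 _) (wt_nonneg _ _ _)
  have hGnn : ∀ m, 0 ≤ normR R (mconv η₁ η₂ m) / wt r s m := fun m =>
    div_nonneg (normR_nonneg hR0 _) (wt_nonneg _ _ _)
  -- pointwise bound
  have hbound : ∀ m : Fin κ → ℕ, normR R (mconv η₁ η₂ m) / wt r s m ≤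
      ∑ p ∈ mT m, C * ((normR R (η₁ p.1) / wt r s p.1) * (normR R (η₂ p.2) / wt r s p.2)) := by
    intro m
    by_cases hm : m = 0
    · subst hm
      rw [hG0, normR_zero, zero_div]
      exact Finset.sum_nonneg fun p _ =>
        mul_nonneg hC0 (mul_nonneg (hF₁nn _) (hF₂nn _))
    · have hwm := hwpos m hm
      calc normR R (mconv η₁ η₂ m) / wt r s m
          ≤ (∑ p ∈ mT m, normR R (η₁ p.1 * η₂ p.2)) / wt r s m := by
            gcongr
            rw [mconv_eq]
            exact normR_sum_le hR0 _ _
        _ = ∑ p ∈ mT m, normR R (η₁ p.1 * η₂ p.2) / wt r s m := Finset.sum_div _ _ _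
        _ ≤ ∑ p ∈ mT m, C * ((normR R (η₁ p.1) / wt r s p.1) *
              (normR R (η₂ p.2) / wt r s p.2)) := by
            refine Finset.sum_le_sum fun p hp => ?_
            rw [mem_mT] at hp
            by_cases hp1 : p.1 = 0
            · have hz : normR R (η₁ p.1 * η₂ p.2) = 0 := by
                rw [hp1, h₁0, zero_mul, normR_zero]
              rw [hz, zero_div]
              exact mul_nonneg hC0 (mul_nonneg (hF₁nn _) (hF₂nn _))
            by_cases hp2 : p.2 = 0
            · have hz : normR R (η₁ p.1 * η₂ p.2) = 0 := by
                rw [hp2, h₂0, mul_zero, normR_zero]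
              rw [hz, zero_div]
              exact mul_nonneg hC0 (mul_nonneg (hF₁nn _) (hF₂nn _))
            have hw1 := hwpos p.1 hp1
            have hw2 := hwpos p.2 hp2
            have hmul := normR_mul_le hR0 (η₁ p.1) (η₂ p.2)
            have hk := hkey p.1 p.2 hp1 hp2
            rw [hp] at hk
            have hrhs : C * ((normR R (η₁ p.1) / wt r s p.1) *
                (normR R (η₂ p.2) / wt r s p.2)) =
                C * normR R (η₁ p.1) * normR R (η₂ p.2) / (wt r s p.1 * wt r s p.2) := by
              field_simp
            rw [hrhs, div_le_div_iff₀ hwm (mul_pos hw1 hw2)]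
            have hn1 := normR_nonneg hR0 (η₁ p.1)
            have hn2 := normR_nonneg hR0 (η₂ p.2)
            have hnp := normR_nonneg hR0 (η₁ p.1 * η₂ p.2)
            have key2 : normR R (η₁ p.1 * η₂ p.2) * (wt r s p.1 * wt r s p.2) ≤
                (normR R (η₁ p.1) * normR R (η₂ p.2)) * (C * wt r s m) :=
              mul_le_mul hmul hk (mul_pos hw1 hw2).le (mul_nonneg hn1 hn2)
            nlinarith [key2]
  -- ENNReal machinery
  set f : (Fin κ → ℕ) → ENNReal := fun m => ENNReal.ofReal (normR R (η₁ m) / wt r s m)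
    with hfdef
  set g : (Fin κ → ℕ) → ENNReal := fun m => ENNReal.ofReal (normR R (η₂ m) / wt r s m)
    with hgdef
  -- full-type summability of the factors
  have hs₁ : Summable (fun m : Fin κ → ℕ => normR R (η₁ m) / wt r s m) := by
    refine (summable_subtype_and_compl (s := {m : Fin κ → ℕ | m ≠ 0})).mp ⟨h₁sum, ?_⟩
    have hfin : Finite ↥({m : Fin κ → ℕ | m ≠ 0}ᶜ) := by
      have he : ({m : Fin κ → ℕ | m ≠ 0}ᶜ) = {0} := by ext x; simp
      rw [he]
      exact (Set.finite_singleton _).to_subtype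
    exact Summable.of_finite
  have hs₂ : Summable (fun m : Fin κ → ℕ => normR R (η₂ m) / wt r s m) := by
    refine (summable_subtype_and_compl (s := {m : Fin κ → ℕ | m ≠ 0})).mp ⟨h₂sum, ?_⟩
    have hfin : Finite ↥({m : Fin κ → ℕ | m ≠ 0}ᶜ) := by
      have he : ({m : Fin κ → ℕ | m ≠ 0}ᶜ) = {0} := by ext x; simp
      rw [he]
      exact (Set.finite_singleton _).to_subtype
    exact Summable.of_finite
  have hsupp₁ : Function.support (fun m : Fin κ → ℕ => normR R (η₁ m) / wt r s m) ⊆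
      {m : Fin κ → ℕ | m ≠ 0} := by
    intro m hm
    intro h0
    apply hm
    simp only [h0, h₁0, normR_zero, zero_div]
  have hsupp₂ : Function.support (fun m : Fin κ → ℕ => normR R (η₂ m) / wt r s m) ⊆
      {m : Fin κ → ℕ | m ≠ 0} := by
    intro m hm
    intro h0
    apply hm
    simp only [h0, h₂0, normR_zero, zero_div]
  have htsum₁ : ∑' m : Fin κ → ℕ, normR R (η₁ m) / wt r s m = norm0 r s R η₁ :=
    (tsum_subtype_eq_of_support_subset hsupp₁).symm
  have htsum₂ : ∑' m : Fin κ → ℕ, normR R (η₂ m) / wt r s m = norm0 r s R η₂ :=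
    (tsum_subtype_eq_of_support_subset hsupp₂).symm
  have hf_tsum : ∑' m, f m = ENNReal.ofReal (norm0 r s R η₁) := by
    rw [hfdef, ← ENNReal.ofReal_tsum_of_nonneg hF₁nn hs₁, htsum₁]
  have hg_tsum : ∑' m, g m = ENNReal.ofReal (norm0 r s R η₂) := by
    rw [hgdef, ← ENNReal.ofReal_tsum_of_nonneg hF₂nn hs₂, htsum₂]
  -- the main ENNReal estimate
  have main : ∑' m : Fin κ → ℕ, ENNReal.ofReal (normR R (mconv η₁ η₂ m) / wt r s m) ≤
      ENNReal.ofReal C * ENNReal.ofReal (norm0 r s R η₁) * ENNReal.ofReal (norm0 r s R η₂) := by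
    have step1 : ∀ m : Fin κ → ℕ,
        ENNReal.ofReal (normR R (mconv η₁ η₂ m) / wt r s m) ≤
        ∑ p ∈ mT m, ENNReal.ofReal C * f p.1 * g p.2 := by
      intro m
      refine le_trans (ENNReal.ofReal_le_ofReal (hbound m)) ?_
      rw [ENNReal.ofReal_sum_of_nonneg
        (fun p _ => mul_nonneg hC0 (mul_nonneg (hF₁nn _) (hF₂nn _)))]
      refine le_of_eq (Finset.sum_congr rfl fun p _ => ?_)
      rw [ENNReal.ofReal_mul hC0, ENNReal.ofReal_mul (hF₁nn _)]
      rw [hfdef, hgdef]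
      ring
    calc ∑' m : Fin κ → ℕ, ENNReal.ofReal (normR R (mconv η₁ η₂ m) / wt r s m)
        ≤ ∑' m : Fin κ → ℕ, ∑ p ∈ mT m, ENNReal.ofReal C * f p.1 * g p.2 :=
          ENNReal.tsum_le_tsum step1
      _ = ∑' (m : Fin κ → ℕ) (p : (Fin κ → ℕ) × (Fin κ → ℕ)),
            if p.1 + p.2 = m then ENNReal.ofReal C * f p.1 * g p.2 else 0 := by
          refine tsum_congr fun m => ?_
          rw [tsum_eq_sum (s := mT m)
            (fun p hp => if_neg (fun h => hp ((mem_mT m p).mpr h)))]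
          exact Finset.sum_congr rfl fun p hp => (if_pos ((mem_mT m p).mp hp)).symm
      _ = ∑' (p : (Fin κ → ℕ) × (Fin κ → ℕ)) (m : Fin κ → ℕ),
            if p.1 + p.2 = m then ENNReal.ofReal C * f p.1 * g p.2 else 0 :=
          ENNReal.tsum_comm
      _ = ∑' p : (Fin κ → ℕ) × (Fin κ → ℕ), ENNReal.ofReal C * f p.1 * g p.2 := by
          refine tsum_congr fun p => ?_
          have he : ∀ m : Fin κ → ℕ,
              (if p.1 + p.2 = m then ENNReal.ofReal C * f p.1 * g p.2 else 0) =
              (if m = p.1 + p.2 then ENNReal.ofReal C * f p.1 * g p.2 else 0) := fun m =>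
            if_congr eq_comm rfl rfl
          rw [tsum_congr he, tsum_ite_eq]
      _ = ENNReal.ofReal C * ((∑' m, f m) * (∑' m, g m)) := by
          rw [ENNReal.tsum_prod']
          calc ∑' (a : Fin κ → ℕ) (b : Fin κ → ℕ), ENNReal.ofReal C * f a * g b
              = ∑' a : Fin κ → ℕ, (ENNReal.ofReal C * f a) * ∑' b, g b := by
                refine tsum_congr fun a => ?_
                rw [ENNReal.tsum_mul_left]
            _ = (∑' a : Fin κ → ℕ, ENNReal.ofReal C * f a) * ∑' b, g b :=
                ENNReal.tsum_mul_right
            _ = ENNReal.ofReal C * ((∑' m, f m) * (∑' m, g m)) := by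
                rw [ENNReal.tsum_mul_left]; ring
      _ = ENNReal.ofReal C * ENNReal.ofReal (norm0 r s R η₁) *
            ENNReal.ofReal (norm0 r s R η₂) := by
          rw [hf_tsum, hg_tsum]; ring
  have hKne : ENNReal.ofReal C * ENNReal.ofReal (norm0 r s R η₁) *
      ENNReal.ofReal (norm0 r s R η₂) ≠ ⊤ :=
    ENNReal.mul_ne_top (ENNReal.mul_ne_top ENNReal.ofReal_ne_top ENNReal.ofReal_ne_top)
      ENNReal.ofReal_ne_top
  -- summability of the product family
  have hGsum : Summable (fun m : Fin κ → ℕ => normR R (mconv η₁ η₂ m) / wt r s m) := by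
    have h := ENNReal.summable_toReal (ne_top_of_le_ne_top hKne main)
    exact h.congr fun m => ENNReal.toReal_ofReal (hGnn m)
  have hGsub : Summable (fun m : {m : Fin κ → ℕ // m ≠ 0} =>
      normR R (mconv η₁ η₂ m.1) / wt r s m.1) :=
    hGsum.subtype _
  have hsuppG : Function.support (fun m : Fin κ → ℕ => normR R (mconv η₁ η₂ m) / wt r s m) ⊆
      {m : Fin κ → ℕ | m ≠ 0} := by
    intro m hm
    intro h0
    apply hm
    simp only [h0, hG0, normR_zero, zero_div]
  have htsumG : ∑' m : Fin κ → ℕ, normR R (mconv η₁ η₂ m) / wt r s m =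
      norm0 r s R (mconv η₁ η₂) :=
    (tsum_subtype_eq_of_support_subset hsuppG).symm
  have hN₁nn : 0 ≤ norm0 r s R η₁ := tsum_nonneg fun m => hF₁nn m.1
  have hN₂nn : 0 ≤ norm0 r s R η₂ := tsum_nonneg fun m => hF₂nn m.1
  refine ⟨⟨hG0, hdeg, hGsub⟩, ?_⟩
  have htr : (∑' m : Fin κ → ℕ,
      ENNReal.ofReal (normR R (mconv η₁ η₂ m) / wt r s m)).toReal =
      ∑' m : Fin κ → ℕ, normR R (mconv η₁ η₂ m) / wt r s m := by
    rw [ENNReal.tsum_toReal_eq (fun _ => ENNReal.ofReal_ne_top)]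
    exact tsum_congr fun m => ENNReal.toReal_ofReal (hGnn m)
  calc norm0 r s R (mconv η₁ η₂)
      = (∑' m : Fin κ → ℕ,
          ENNReal.ofReal (normR R (mconv η₁ η₂ m) / wt r s m)).toReal := by
        rw [htr, htsumG]
    _ ≤ (ENNReal.ofReal C * ENNReal.ofReal (norm0 r s R η₁) *
          ENNReal.ofReal (norm0 r s R η₂)).toReal := ENNReal.toReal_mono hKne main
    _ = C * norm0 r s R η₁ * norm0 r s R η₂ := by
        rw [ENNReal.toReal_mul, ENNReal.toReal_mul, ENNReal.toReal_ofReal hC0,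
          ENNReal.toReal_ofReal hN₁nn, ENNReal.toReal_ofReal hN₂nn]
end
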